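/- For every m ∈ (0,1) there exist distinct points x₁, x₂ ∈ (−π/2, π/2) such that γ_o(x₁|m) = γ_o(x₂|m); that is, every orbitlike parametrization has a self-intersection in (−π/2, π/2). -/

import Mathlib

open Real MeasureTheory Set

noncomputable section

abbrev E2 := EuclideanSpace ℝ (Fin 2)

/-- The point of the Euclidean plane with coordinates `(a, b)`. -/
def mkE2 (a b : ℝ) : E2 := WithLp.toLp 2 ![a, b]
/-- Incomplete elliptic integral of the first kind `F(x,m)`. -/
def Fell (x m : ℝ) : ℝ := ∫ θ in (0:ℝ)..x, 1 / Real.sqrt (1 - m * Real.sin θ ^ 2)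

/-- Incomplete elliptic integral of the second kind `E(x,m)`. -/
def Eell (x m : ℝ) : ℝ := ∫ θ in (0:ℝ)..x, Real.sqrt (1 - m * Real.sin θ ^ 2)

/-- Complete elliptic integral of the first kind `K(m)`. -/
def Kc (m : ℝ) : ℝ := Fell (Real.pi / 2) m

/-- Complete elliptic integral of the second kind `E(m)`. -/
def Ec (m : ℝ) : ℝ := Eell (Real.pi / 2) m

/-- `α(m) = arcsin √(1/(2m))`. -/
def alph (m : ℝ) : ℝ := Real.arcsin (Real.sqrt (1 / (2 * m)))

/-- `G(x,m) = ∫₀ˣ (1 − 2m sin²θ)(1 − m sin²θ)^{−1/2} dθ = 2E(x,m) − F(x,m)`. -/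
def Gw (x m : ℝ) : ℝ :=
  ∫ θ in (0:ℝ)..x, (1 - 2 * m * Real.sin θ ^ 2) / Real.sqrt (1 - m * Real.sin θ ^ 2)

/-- `f(m) = ∫₀^{π−α(m)} (1 − 2m sin²θ)(1 − m sin²θ)^{−1/2} dθ`; its unique zero is `m_T`. -/
def fT (m : ℝ) : ℝ := Gw (Real.pi - alph m) m
/-- First component of the orbitlike parametrization. -/
def gammaO1 (m : ℝ) : ℝ → ℝ := fun x => (2 * Eell x m + (m - 2) * Fell x m) / m

/-- Second component of the orbitlike parametrization. -/
def gammaO2 (m : ℝ) : ℝ → ℝ := fun x => -2 * Real.sqrt (1 - m * Real.sin x ^ 2) / m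

/-- The orbitlike parametrization `γ_o(x|m) = (1/m)(2E(x,m) + (m−2)F(x,m), −2√(1 − m sin²x))`. -/
def gammaO (m : ℝ) : ℝ → E2 := fun x => mkE2 (gammaO1 m x) (gammaO2 m x)

/-- Oddness helper: integral from 0 of an even function is odd. -/
lemma odd_primitive (f : ℝ → ℝ) (hf : ∀ t, f (-t) = f t) (x : ℝ) :
    (∫ θ in (0:ℝ)..(-x), f θ) = - ∫ θ in (0:ℝ)..x, f θ := by
  have h1 : (∫ θ in (0:ℝ)..x, f θ) = ∫ θ in (0:ℝ)..x, f (-θ) := by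
    simp only [hf]
  rw [h1, intervalIntegral.integral_comp_neg, neg_zero, ← intervalIntegral.integral_symm]

lemma pos_aux {m : ℝ} (hm1 : m < 1) (hm0 : 0 < m) (θ : ℝ) :
    0 < 1 - m * Real.sin θ ^ 2 := by
  nlinarith [Real.sin_sq_le_one θ, sq_nonneg (Real.sin θ)]

/-- Lemma 2.26: for every `m ∈ (0,1)` the orbitlike parametrization
`γ_o(·|m)` has a self-intersection with parameters in `(−π/2, π/2)`. -/
theorem stmt17 (m : ℝ) (hm : m ∈ Set.Ioo (0:ℝ) 1) :
    ∃ x₁ ∈ Set.Ioo (-(Real.pi / 2)) (Real.pi / 2),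
      ∃ x₂ ∈ Set.Ioo (-(Real.pi / 2)) (Real.pi / 2),
        x₁ ≠ x₂ ∧ gammaO m x₁ = gammaO m x₂ := by
  obtain ⟨hm0, hm1⟩ := hm
  have hpos : ∀ θ : ℝ, 0 < 1 - m * Real.sin θ ^ 2 := pos_aux hm1 hm0
  have hwpos : ∀ θ : ℝ, 0 < Real.sqrt (1 - m * Real.sin θ ^ 2) :=
    fun θ => Real.sqrt_pos.mpr (hpos θ)
  have hwle : ∀ θ : ℝ, Real.sqrt (1 - m * Real.sin θ ^ 2) ≤ 1 := by
    intro θ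
    calc Real.sqrt (1 - m * Real.sin θ ^ 2) ≤ Real.sqrt 1 :=
          Real.sqrt_le_sqrt (by nlinarith [sq_nonneg (Real.sin θ)])
      _ = 1 := Real.sqrt_one
  have hwcont : Continuous fun θ : ℝ => Real.sqrt (1 - m * Real.sin θ ^ 2) :=
    (continuous_const.sub (continuous_const.mul (Real.continuous_sin.pow 2))).sqrt
  -- the combined integrand
  set g : ℝ → ℝ := fun θ => m * Real.cos (2 * θ) / Real.sqrt (1 - m * Real.sin θ ^ 2) with hg_def
  have hgcont : Continuous g :=
    (continuous_const.mul (Real.continuous_cos.comp (continuous_const.mul continuous_id))).div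
      hwcont (fun θ => (hwpos θ).ne')
  set H : ℝ → ℝ := fun x => ∫ θ in (0:ℝ)..x, g θ with hH_def
  have hFcont : Continuous fun θ : ℝ => 1 / Real.sqrt (1 - m * Real.sin θ ^ 2) :=
    continuous_const.div hwcont (fun θ => (hwpos θ).ne')
  -- key pointwise identity
  have hkey : ∀ x : ℝ, 2 * Eell x m + (m - 2) * Fell x m = H x := by
    intro x
    rw [Eell, Fell, hH_def, ← intervalIntegral.integral_const_mul,
      ← intervalIntegral.integral_const_mul,
      ← intervalIntegral.integral_add (f := fun θ => 2 * Real.sqrt (1 - m * Real.sin θ ^ 2))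
        (g := fun θ => (m - 2) * (1 / Real.sqrt (1 - m * Real.sin θ ^ 2)))
        ((continuous_const.mul hwcont).intervalIntegrable 0 x)
        ((continuous_const.mul hFcont).intervalIntegrable 0 x)]
    apply intervalIntegral.integral_congr
    intro θ _
    have ht := hpos θ
    have hw := hwpos θ
    have hsq : Real.sqrt (1 - m * Real.sin θ ^ 2) * Real.sqrt (1 - m * Real.sin θ ^ 2)
        = 1 - m * Real.sin θ ^ 2 := Real.mul_self_sqrt ht.le
    have hc2 : Real.cos (2 * θ) = 1 - 2 * Real.sin θ ^ 2 := by
      rw [Real.cos_two_mul, Real.cos_sq']; ring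
    simp only [hg_def]
    rw [hc2]
    field_simp
    nlinarith [hsq]
  have Hcont : Continuous H :=
    intervalIntegral.continuous_primitive (fun a b => hgcont.intervalIntegrable a b) 0
  have pi_pos := Real.pi_pos
  -- H (π/4) > 0
  have H4 : 0 < H (Real.pi / 4) := by
    have hmono : (∫ θ in (0:ℝ)..(Real.pi/4), m * Real.cos (2 * θ)) ≤ H (Real.pi/4) := by
      apply intervalIntegral.integral_mono_on (by positivity)
        ((continuous_const.mul (Real.continuous_cos.comp
          (continuous_const.mul continuous_id))).intervalIntegrable 0 _)
        (hgcont.intervalIntegrable 0 _)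
      intro θ hθ
      have hc : 0 ≤ Real.cos (2 * θ) := by
        apply Real.cos_nonneg_of_mem_Icc
        constructor <;> [linarith [hθ.1]; linarith [hθ.2]]
      have : 0 ≤ m * Real.cos (2 * θ) := by positivity
      rw [hg_def, le_div_iff₀ (hwpos θ)]
      exact mul_le_of_le_one_right this (hwle θ)
    have hval : (∫ θ in (0:ℝ)..(Real.pi/4), m * Real.cos (2 * θ)) = m / 2 := by
      have h1 : ∀ θ : ℝ, m * Real.cos (2 * θ) = m * (Real.cos θ ^ 2 - Real.sin θ ^ 2) := by
        intro θ; rw [Real.cos_two_mul, Real.cos_sq']; ring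
      simp only [h1]
      rw [intervalIntegral.integral_const_mul, integral_cos_sq_sub_sin_sq]
      norm_num [Real.sin_pi_div_four, Real.cos_pi_div_four]
      have h2 : Real.sqrt 2 * Real.sqrt 2 = 2 := Real.mul_self_sqrt (by norm_num)
      nlinarith
    linarith
  -- H (π/2) < 0
  have H2 : H (Real.pi / 2) < 0 := by
    have hsplit : H (Real.pi/2) = H (Real.pi/4) + ∫ θ in (Real.pi/4)..(Real.pi/2), g θ :=
      (intervalIntegral.integral_add_adjacent_intervals
        (hgcont.intervalIntegrable _ _) (hgcont.intervalIntegrable _ _)).symm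
    have hrefl : (∫ θ in (Real.pi/4)..(Real.pi/2), g θ)
        = ∫ θ in (0:ℝ)..(Real.pi/4), g (Real.pi/2 - θ) := by
      rw [intervalIntegral.integral_comp_sub_left g (Real.pi/2)]
      rw [show Real.pi/2 - Real.pi/4 = Real.pi/4 by ring, sub_zero]
    have hint2 : IntervalIntegrable (fun θ => g (Real.pi/2 - θ)) volume 0 (Real.pi/4) :=
      Continuous.intervalIntegrable (hgcont.comp (continuous_const.sub continuous_id)) _ _
    have hadd : (∫ θ in (0:ℝ)..(Real.pi/4), (g θ + g (Real.pi/2 - θ)))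
        = (∫ θ in (0:ℝ)..(Real.pi/4), g θ) + ∫ θ in (0:ℝ)..(Real.pi/4), g (Real.pi/2 - θ) :=
      intervalIntegral.integral_add (hgcont.intervalIntegrable _ _) hint2
    have hcomb : H (Real.pi/2) = ∫ θ in (0:ℝ)..(Real.pi/4), (g θ + g (Real.pi/2 - θ)) := by
      rw [hsplit, hrefl, hadd]
    rw [hcomb]
    have hlt : (∫ θ in (0:ℝ)..(Real.pi/4), (g θ + g (Real.pi/2 - θ)))
        < ∫ _ in (0:ℝ)..(Real.pi/4), (0:ℝ) := by
      apply intervalIntegral.integral_lt_integral_of_continuousOn_of_le_of_exists_lt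
        (f := fun θ => g θ + g (Real.pi/2 - θ)) (g := fun _ => (0:ℝ))
        (by positivity)
        (Continuous.continuousOn
          (hgcont.add (hgcont.comp (continuous_const.sub continuous_id))))
        continuousOn_const
      · -- ≤ 0 on Ioc
        intro θ hθ
        have h1 : g (Real.pi/2 - θ) = - (m * Real.cos (2*θ) / Real.sqrt (1 - m * Real.cos θ ^ 2)) := by
          rw [hg_def]
          simp only
          rw [show 2 * (Real.pi/2 - θ) = Real.pi - 2*θ by ring, Real.cos_pi_sub,
            Real.sin_pi_div_two_sub]
          ring
        have hc : 0 ≤ Real.cos (2 * θ) := by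
          apply Real.cos_nonneg_of_mem_Icc
          constructor <;> [linarith [hθ.1]; linarith [hθ.2]]
        have hAB : 1 - m * Real.cos θ ^ 2 ≤ 1 - m * Real.sin θ ^ 2 := by
          have : Real.sin θ ^ 2 ≤ Real.cos θ ^ 2 := by
            nlinarith [hc, Real.cos_two_mul θ, Real.sin_sq_add_cos_sq θ]
          nlinarith
        have hBpos : 0 < 1 - m * Real.cos θ ^ 2 := by
          nlinarith [Real.cos_sq_le_one θ]
        have hdiv : m * Real.cos (2*θ) / Real.sqrt (1 - m * Real.sin θ ^ 2)
            ≤ m * Real.cos (2*θ) / Real.sqrt (1 - m * Real.cos θ ^ 2) := by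
          apply div_le_div_of_nonneg_left (by positivity) (Real.sqrt_pos.mpr hBpos)
            (Real.sqrt_le_sqrt hAB)
        rw [h1]
        simp only [hg_def]
        linarith
      · -- strict at π/8
        refine ⟨Real.pi/8, ⟨by positivity, by linarith⟩, ?_⟩
        have h1 : g (Real.pi/2 - Real.pi/8)
            = - (m * Real.cos (2*(Real.pi/8)) / Real.sqrt (1 - m * Real.cos (Real.pi/8) ^ 2)) := by
          rw [hg_def]
          simp only
          rw [show 2 * (Real.pi/2 - Real.pi/8) = Real.pi - 2*(Real.pi/8) by ring, Real.cos_pi_sub,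
            Real.sin_pi_div_two_sub]
          ring
        have hc : 0 < Real.cos (2 * (Real.pi/8)) := by
          apply Real.cos_pos_of_mem_Ioo
          constructor <;> [linarith; linarith]
        have hsc : Real.sin (Real.pi/8) ^ 2 < Real.cos (Real.pi/8) ^ 2 := by
          nlinarith [hc, Real.cos_two_mul (Real.pi/8), Real.sin_sq_add_cos_sq (Real.pi/8)]
        have hAB : 1 - m * Real.cos (Real.pi/8) ^ 2 < 1 - m * Real.sin (Real.pi/8) ^ 2 := by
          nlinarith
        have hBpos : 0 < 1 - m * Real.cos (Real.pi/8) ^ 2 := by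
          nlinarith [Real.cos_sq_le_one (Real.pi/8)]
        have hdiv : m * Real.cos (2*(Real.pi/8)) / Real.sqrt (1 - m * Real.sin (Real.pi/8) ^ 2)
            < m * Real.cos (2*(Real.pi/8)) / Real.sqrt (1 - m * Real.cos (Real.pi/8) ^ 2) := by
          apply div_lt_div_of_pos_left (by positivity) (Real.sqrt_pos.mpr hBpos)
            (Real.sqrt_lt_sqrt hBpos.le hAB)
        rw [h1]
        simp only [hg_def]
        linarith
    simpa using hlt
  -- IVT to find the root
  have hle : Real.pi/4 ≤ Real.pi/2 := by linarith
  obtain ⟨x, hx, hHx⟩ := intermediate_value_Icc' hle Hcont.continuousOn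
    (⟨H2.le, H4.le⟩ : (0:ℝ) ∈ Icc (H (Real.pi/2)) (H (Real.pi/4)))
  have hx1 : Real.pi/4 ≤ x := hx.1
  have hx2 : x < Real.pi/2 := lt_of_le_of_ne hx.2 (fun h => by rw [h] at hHx; linarith)
  have hx0 : 0 < x := by linarith
  have hne : x ≠ -x := by
    intro h
    have : x = 0 := by linarith [h]
    exact hx0.ne' this
  refine ⟨x, ⟨by linarith, hx2⟩, -x, ⟨by linarith, by linarith⟩, hne, ?_⟩
  -- equality of the two points
  have hE : Eell (-x) m = - Eell x m := odd_primitive _ (fun t => by simp [Real.sin_neg]) x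
  have hF : Fell (-x) m = - Fell x m := odd_primitive _ (fun t => by simp [Real.sin_neg]) x
  have h0 : 2 * Eell x m + (m - 2) * Fell x m = 0 := by rw [hkey]; exact hHx
  have hg1 : gammaO1 m x = gammaO1 m (-x) := by
    unfold gammaO1
    rw [hE, hF]
    have h1 : 2 * (- Eell x m) + (m-2) * (- Fell x m)
        = -(2 * Eell x m + (m-2) * Fell x m) := by ring
    rw [h1, h0]
    norm_num
  have hg2 : gammaO2 m x = gammaO2 m (-x) := by
    unfold gammaO2
    rw [Real.sin_neg, neg_sq]
  unfold gammaO
  rw [hg1, hg2]
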